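/- In the construction of H from G above (original edges of weight 2M−p_e with M > ∑_e p_e ≥ 0, auxiliary edges of weight M joining V'_g to V_g with |V'_g| = |V_g|−ρ_g), any matching in H whose total weight exceeds (n−1)M must match every vertex of V, and consequently matches at least ρ_g vertices of each group V_g via original edges of G. -/

import Mathlib

open Finset

/-- A matching in a graph given by its edge set `EX`: a subset of edges, pairwise
vertex-disjoint. -/
def IsMatching {X : Type*} (EX M : Finset (Sym2 X)) : Prop :=
  M ⊆ EX ∧ ∀ e ∈ M, ∀ e' ∈ M, e ≠ e' → ∀ x : X, ¬(x ∈ e ∧ x ∈ e')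

open scoped Classical in
private lemma cnt_card_two {V A : Type*} [Fintype V] [DecidableEq V]
    (e0 : Sym2 V) (h : ¬ e0.IsDiag) :
    (univ.filter fun v => (Sum.inl v : V ⊕ A) ∈ Sym2.map Sum.inl e0).card = 2 := by
  induction e0 using Sym2.ind with
  | _ a b =>
    have hab : a ≠ b := by simpa [Sym2.isDiag_iff_proj_eq] using h
    have hset : (univ.filter fun v => (Sum.inl v : V ⊕ A) ∈ Sym2.map Sum.inl s(a, b))
        = {a, b} := by
      ext v
      simp only [mem_filter, mem_univ, true_and, Sym2.map_pair_eq, Sym2.mem_iff,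
        Sum.inl.injEq, mem_insert, mem_singleton]
    rw [hset, card_insert_of_notMem (by simpa using hab), card_singleton]

open scoped Classical in
/-- in the construction of `H` from `G`, any matching in `H` of total weight
exceeding `(n−1)·M` matches every vertex of `V`, and consequently matches at least `ρ_g`
vertices of each group `V_g` via original edges of `G`. -/
theorem heavy_matching_covers
    {V A : Type*} [Fintype V] [Fintype A] [DecidableEq V] [DecidableEq A]
    (ω : ℕ) (part : V → Fin ω) (grp : A → Fin ω) (ρ : Fin ω → ℕ)
    (hρ : ∀ g, ρ g ≤ (univ.filter fun v => part v = g).card)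
    (haux : ∀ g, (univ.filter fun a => grp a = g).card
        = (univ.filter fun v => part v = g).card - ρ g)
    (EG : Finset (Sym2 V)) (hEGsimple : ∀ e ∈ EG, ¬ e.IsDiag)
    (p : Sym2 V → ℝ) (hp : ∀ e, 0 ≤ p e)
    (M : ℝ) (hM : ∑ e ∈ EG, p e < M)
    (EH : Finset (Sym2 (V ⊕ A)))
    (hEH : ∀ e : Sym2 (V ⊕ A), e ∈ EH ↔
      (∃ e0 ∈ EG, e = e0.map Sum.inl) ∨
      (∃ (v : V) (a : A), part v = grp a ∧ e = s(Sum.inl v, Sum.inr a)))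
    (wH : Sym2 (V ⊕ A) → ℝ)
    (hwH1 : ∀ e0 ∈ EG, wH (e0.map Sum.inl) = 2 * M - p e0)
    (hwH2 : ∀ (v : V) (a : A), wH s(Sum.inl v, Sum.inr a) = M)
    (MH : Finset (Sym2 (V ⊕ A))) (hMH : IsMatching EH MH)
    (hheavy : ((Fintype.card V : ℝ) - 1) * M < ∑ e ∈ MH, wH e) :
    (∀ v : V, ∃ e ∈ MH, (Sum.inl v : V ⊕ A) ∈ e) ∧
    (∀ g, ρ g ≤ (univ.filter fun v =>
        part v = g ∧ ∃ e0 ∈ EG, Sym2.map Sum.inl e0 ∈ MH ∧ v ∈ e0).card) := by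
  classical
  obtain ⟨hsub, hdisj⟩ := hMH
  have hM0 : 0 < M := lt_of_le_of_lt (Finset.sum_nonneg fun e _ => hp e) hM
  set cnt : Sym2 (V ⊕ A) → Finset V :=
    fun e => univ.filter fun v => Sum.inl v ∈ e with hcnt
  -- weight bound per edge
  have hW : ∀ e ∈ MH, wH e ≤ ((cnt e).card : ℝ) * M := by
    intro e he
    rcases (hEH e).1 (hsub he) with ⟨e0, he0, rfl⟩ | ⟨v, a, hva, rfl⟩
    · have hc2 : (cnt (Sym2.map Sum.inl e0)).card = 2 := by
        have := cnt_card_two (A := A) e0 (hEGsimple _ he0)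
        simpa [hcnt] using this
      rw [hc2, hwH1 _ he0]
      have := hp e0
      push_cast
      linarith
    · have hone : (cnt s(Sum.inl v, Sum.inr a)).card = 1 := by
        have : cnt s(Sum.inl v, Sum.inr a) = {v} := by
          ext u
          simp [hcnt, Sym2.mem_iff]
        rw [this, card_singleton]
      rw [hone, hwH2]
      simp
  -- disjointness of the vertex sets
  have hpair : ∀ e ∈ MH, ∀ e' ∈ MH, e ≠ e' → Disjoint (cnt e) (cnt e') := by
    intro e he e' he' hne
    rw [Finset.disjoint_left]
    intro v hv hv'
    simp only [hcnt, mem_filter] at hv hv'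
    exact hdisj e he e' he' hne (Sum.inl v) ⟨hv.2, hv'.2⟩
  set S : Finset V := MH.biUnion cnt with hS
  have hSsum : (S.card : ℝ) = ∑ e ∈ MH, ((cnt e).card : ℝ) := by
    rw [hS, card_biUnion hpair]
    push_cast
    rfl
  have htot : ∑ e ∈ MH, wH e ≤ (S.card : ℝ) * M := by
    rw [hSsum, Finset.sum_mul]
    exact Finset.sum_le_sum hW
  -- every vertex is covered
  have hcover : ∀ v : V, ∃ e ∈ MH, (Sum.inl v : V ⊕ A) ∈ e := by
    by_contra hcon
    push_neg at hcon
    obtain ⟨v, hv⟩ := hcon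
    have hvS : v ∉ S := by
      simp only [hS, mem_biUnion, hcnt, mem_filter, mem_univ, true_and]
      rintro ⟨e, he, hve⟩
      exact hv e he hve
    have hcard : S.card ≤ Fintype.card V - 1 := by
      have h1 : S ⊆ univ.erase v := fun u hu => mem_erase.2 ⟨fun h => hvS (h ▸ hu), mem_univ u⟩
      calc S.card ≤ (univ.erase v).card := card_le_card h1
        _ = Fintype.card V - 1 := by rw [card_erase_of_mem (mem_univ v), card_univ]
    have hn1 : 1 ≤ Fintype.card V := Fintype.card_pos_iff.2 ⟨v⟩
    have hcardR : (S.card : ℝ) ≤ (Fintype.card V : ℝ) - 1 := by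
      have := (Nat.cast_le (α := ℝ)).2 hcard
      rwa [Nat.cast_sub hn1, Nat.cast_one] at this
    have : ∑ e ∈ MH, wH e ≤ ((Fintype.card V : ℝ) - 1) * M :=
      htot.trans (mul_le_mul_of_nonneg_right hcardR hM0.le)
    linarith
  refine ⟨hcover, fun g => ?_⟩
  set Vg := univ.filter fun v => part v = g with hVgdef
  set Ag := univ.filter fun a => grp a = g with hAgdef
  set Orig := univ.filter (fun v =>
    part v = g ∧ ∃ e0 ∈ EG, Sym2.map Sum.inl e0 ∈ MH ∧ v ∈ e0) with hOrigdef
  set Aux := univ.filter (fun v =>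
    part v = g ∧ ∃ a, grp a = g ∧ s(Sum.inl v, Sum.inr a) ∈ MH) with hAuxdef
  have hVgsub : Vg ⊆ Orig ∪ Aux := by
    intro v hv
    rw [hVgdef, mem_filter] at hv
    obtain ⟨e, he, hve⟩ := hcover v
    rw [mem_union]
    rcases (hEH e).1 (hsub he) with ⟨e0, he0, rfl⟩ | ⟨u, a, hua, heq⟩
    · left
      rw [hOrigdef, mem_filter]
      refine ⟨mem_univ v, hv.2, e0, he0, he, ?_⟩
      rw [Sym2.mem_map] at hve
      obtain ⟨u, hu, huv⟩ := hve
      exact (Sum.inl.inj huv) ▸ hu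
    · right
      subst heq
      have hvu : v = u := by
        rw [Sym2.mem_iff] at hve
        rcases hve with h | h
        · exact Sum.inl.inj h
        · exact absurd h (by simp)
      subst hvu
      rw [hAuxdef, mem_filter]
      exact ⟨mem_univ v, hv.2, a, hua ▸ hv.2, he⟩
  -- injection from Aux into Ag
  have hAuxcard : Aux.card ≤ Ag.card := by
    rcases Aux.eq_empty_or_nonempty with h | ⟨v0, hv0⟩
    · simp [h]
    · have hA : Nonempty A := by
        rw [hAuxdef, mem_filter] at hv0
        exact ⟨hv0.2.2.choose⟩
      set f : V → A := fun v =>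
        if h : ∃ a, grp a = g ∧ s(Sum.inl v, Sum.inr a) ∈ MH then h.choose
        else Classical.arbitrary A with hf
    
      have hfspec : ∀ v ∈ Aux, grp (f v) = g ∧ s(Sum.inl v, Sum.inr (f v)) ∈ MH := by
        intro v hv
        rw [hAuxdef, mem_filter] at hv
        have h := hv.2.2
        rw [hf]
        simp only [h, dif_pos]
        exact h.choose_spec
      apply card_le_card_of_injOn f
      · intro v hv
        rw [hAgdef, mem_coe, mem_filter]
        exact ⟨mem_univ _, (hfspec v hv).1⟩
      · intro v hv v' hv' hff
        by_contra hne
        have h1 := (hfspec v hv).2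
        have h2 := (hfspec v' hv').2
        rw [hff] at h1
        have hEne : s(Sum.inl v, Sum.inr (f v')) ≠ s(Sum.inl v', Sum.inr (f v')) := by
          intro h
          rw [Sym2.eq_iff] at h
          rcases h with ⟨h, _⟩ | ⟨h, _⟩
          · exact hne (Sum.inl.inj h)
          · exact absurd h (by simp)
        exact hdisj _ h1 _ h2 hEne (Sum.inr (f v'))
          ⟨by simp [Sym2.mem_iff], by simp [Sym2.mem_iff]⟩
  have h1 : Vg.card ≤ Orig.card + Aux.card :=
    (card_le_card hVgsub).trans (card_union_le _ _)
  have h2 : Ag.card = Vg.card - ρ g := haux g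
  have h3 : ρ g ≤ Vg.card := hρ g
  have goalcard : (univ.filter fun v =>
      part v = g ∧ ∃ e0 ∈ EG, Sym2.map Sum.inl e0 ∈ MH ∧ v ∈ e0).card = Orig.card := by
    rw [hOrigdef]
  rw [goalcard]
  omega
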